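/- Let S ⊂ ℝ^n be an n-dimensional simplex (the convex hull of n+1 affinely independent points) and let χ_S be its characteristic function. Then ∫_{ℝ^n} Δ_{−∞} χ_S (z) dz = 2^{−n} · C(2n, n) · V_n(S), where C(2n, n) denotes the binomial coefficient (2n choose n) and V_n is the n-dimensional Lebesgue measure. -/

import Mathlib

open MeasureTheory Set
open scoped ENNReal Classical

/-- The `(−∞)`-difference function of `f`:
`Δ_{−∞} f(z) = sup { min(f(x), f(−y)) : (x+y)/2 = z }`, valued in `[0,∞]`. -/
noncomputable def diffNegInf {n : ℕ} (f : (Fin n → ℝ) → ℝ) (z : Fin n → ℝ) : ℝ≥0∞ :=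
  sSup {r : ℝ≥0∞ | ∃ x y : Fin n → ℝ, (1 / 2 : ℝ) • (x + y) = z ∧
    r = ENNReal.ofReal (min (f x) (f (-y)))}

open scoped Pointwise

noncomputable section AuxSimplexVolume


def simplexSet (ι : Type*) [Fintype ι] : Set (ι → ℝ) :=
  {x | (∀ i, 0 ≤ x i) ∧ ∑ i, x i ≤ 1}

lemma isClosed_simplexSet (ι : Type*) [Fintype ι] : IsClosed (simplexSet ι) := by
  have h1 : IsClosed {x : ι → ℝ | ∀ i, 0 ≤ x i} := by
    have : {x : ι → ℝ | ∀ i, 0 ≤ x i} = ⋂ i, {x | 0 ≤ x i} := by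
      ext x; simp
    rw [this]
    exact isClosed_iInter fun i => isClosed_le continuous_const (continuous_apply i)
  have h2 : IsClosed {x : ι → ℝ | ∑ i, x i ≤ 1} :=
    isClosed_le (continuous_finset_sum _ fun i _ => continuous_apply i) continuous_const
  exact h1.inter h2

lemma simplexSet_nonempty (ι : Type*) [Fintype ι] : (simplexSet ι).Nonempty :=
  ⟨0, fun i => le_refl 0, by simp⟩

lemma smul_simplexSet {ι : Type*} [Fintype ι] {a : ℝ} (ha : 0 ≤ a) :
    {x : ι → ℝ | (∀ i, 0 ≤ x i) ∧ ∑ i, x i ≤ a} = a • simplexSet ι := by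
  rcases ha.eq_or_lt with h | h
  · rw [← h, Set.zero_smul_set (simplexSet_nonempty ι)]
    ext x
    simp only [Set.mem_setOf_eq, Set.mem_zero, Set.mem_singleton_iff]
    constructor
    · rintro ⟨h0, hs⟩
      funext i
      have := (Finset.sum_eq_zero_iff_of_nonneg (fun i _ => h0 i)).1
        (le_antisymm hs (Finset.sum_nonneg fun i _ => h0 i)) i (Finset.mem_univ i)
      simpa using this
    · rintro rfl; exact ⟨fun i => le_refl 0, by simp⟩
  · ext x
    rw [Set.mem_smul_set_iff_inv_smul_mem₀ (ne_of_gt h)]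
    simp only [Set.mem_setOf_eq, simplexSet, Pi.smul_apply, smul_eq_mul]
    constructor
    · rintro ⟨h0, hs⟩
      refine ⟨fun i => mul_nonneg (inv_nonneg.2 ha) (h0 i), ?_⟩
      rw [← Finset.mul_sum, inv_mul_le_iff₀ h, mul_one]
      exact hs
    · rintro ⟨h0, hs⟩
      have h0' : ∀ i, 0 ≤ x i := fun i => by
        have h2 : 0 ≤ a * (a⁻¹ * x i) := mul_nonneg ha (h0 i)
        rwa [← mul_assoc, mul_inv_cancel₀ (ne_of_gt h), one_mul] at h2
      refine ⟨h0', ?_⟩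
      rw [← Finset.mul_sum, inv_mul_le_iff₀ h, mul_one] at hs
      exact hs

lemma volume_scaled_simplexSet {ι : Type*} [Fintype ι] {a : ℝ} (ha : 0 ≤ a) :
    volume {x : ι → ℝ | (∀ i, 0 ≤ x i) ∧ ∑ i, x i ≤ a}
      = ENNReal.ofReal (a ^ Fintype.card ι) * volume (simplexSet ι) := by
  rw [smul_simplexSet ha, Measure.addHaar_smul volume, abs_pow, abs_of_nonneg ha,
    Module.finrank_pi]

lemma volume_simplexSet_fin (n : ℕ) :
    volume (simplexSet (Fin n)) = ((n.factorial : ℝ≥0∞))⁻¹ := by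
  induction n with
  | zero =>
    have : simplexSet (Fin 0) = Set.univ := by
      ext x; simp [simplexSet]
    rw [this]
    rw [MeasureTheory.volume_pi, Measure.pi_univ]
    simp [Nat.factorial]
  | succ n ih =>
    set Vn := volume (simplexSet (Fin n)) with hVn
    set e := MeasurableEquiv.piFinSuccAbove (fun _ : Fin (n + 1) => ℝ) 0 with he
    set B : Set (ℝ × (Fin n → ℝ)) :=
      {q | 0 ≤ q.1 ∧ (∀ i, 0 ≤ q.2 i) ∧ q.1 + ∑ i, q.2 i ≤ 1} with hB
    have hBclosed : IsClosed B := by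
      have h1 : IsClosed {q : ℝ × (Fin n → ℝ) | 0 ≤ q.1} :=
        isClosed_le continuous_const continuous_fst
      have h2 : IsClosed {q : ℝ × (Fin n → ℝ) | ∀ i, 0 ≤ q.2 i} := by
        have : {q : ℝ × (Fin n → ℝ) | ∀ i, 0 ≤ q.2 i} = ⋂ i, {q | 0 ≤ q.2 i} := by
          ext q; simp
        rw [this]
        exact isClosed_iInter fun i =>
          isClosed_le continuous_const ((continuous_apply i).comp continuous_snd)
      have h3 : IsClosed {q : ℝ × (Fin n → ℝ) | q.1 + ∑ i, q.2 i ≤ 1} :=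
        isClosed_le (continuous_fst.add (continuous_finset_sum _ fun i _ =>
          (continuous_apply i).comp continuous_snd)) continuous_const
      have : B = {q : ℝ × (Fin n → ℝ) | 0 ≤ q.1} ∩
          ({q | ∀ i, 0 ≤ q.2 i} ∩ {q | q.1 + ∑ i, q.2 i ≤ 1}) := by
        ext q; simp [hB, and_assoc]
      rw [this]
      exact h1.inter (h2.inter h3)
    have hBmeas : MeasurableSet B := hBclosed.measurableSet
    have heapp : ∀ x : Fin (n+1) → ℝ, e x = (x 0, fun j => x j.succ) := by
      intro x
      have : e x = (x 0, fun j => x ((0 : Fin (n+1)).succAbove j)) := rfl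
      rw [this]
      simp [Fin.zero_succAbove]
    have hpre : simplexSet (Fin (n + 1)) = e ⁻¹' B := by
      ext x
      simp only [simplexSet, Set.mem_setOf_eq, Set.mem_preimage, heapp x, hB]
      rw [Fin.sum_univ_succ, Fin.forall_fin_succ]
      tauto
    have hvol : volume (simplexSet (Fin (n + 1))) = volume B := by
      rw [hpre]
      exact (volume_preserving_piFinSuccAbove (fun _ : Fin (n + 1) => ℝ) 0).measure_preimage
        hBmeas.nullMeasurableSet
    rw [hvol]
    have hprod : volume B = ∫⁻ t : ℝ, volume {x : Fin n → ℝ | (t, x) ∈ B} := by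
      rw [Measure.volume_eq_prod, Measure.prod_apply hBmeas]
      rfl
    have hsec : ∀ t : ℝ, volume {x : Fin n → ℝ | (t, x) ∈ B}
        = Set.indicator (Icc (0:ℝ) 1) (fun t => ENNReal.ofReal ((1 - t) ^ n) * Vn) t := by
      intro t
      by_cases ht : t ∈ Icc (0:ℝ) 1
      · rw [Set.indicator_of_mem ht]
        have : {x : Fin n → ℝ | (t, x) ∈ B}
            = {x : Fin n → ℝ | (∀ i, 0 ≤ x i) ∧ ∑ i, x i ≤ 1 - t} := by
          ext x
          simp only [hB, Set.mem_setOf_eq]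
          constructor
          · rintro ⟨_, h2, h3⟩; exact ⟨h2, by linarith⟩
          · rintro ⟨h2, h3⟩; exact ⟨ht.1, h2, by linarith⟩
        rw [this, volume_scaled_simplexSet (by linarith [ht.2]), Fintype.card_fin]
      · rw [Set.indicator_of_notMem ht]
        simp only [Set.mem_Icc, not_and_or, not_le] at ht
        have hempty : {x : Fin n → ℝ | (t, x) ∈ B} = ∅ := by
          apply Set.eq_empty_iff_forall_notMem.2
          intro x hx
          rw [hB] at hx
          obtain ⟨h1, h2, h3⟩ := hx
          have hs0 : 0 ≤ ∑ i, x i := Finset.sum_nonneg fun i _ => h2 i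
          rcases ht with h | h
          · linarith
          · linarith
        simp [hempty]
    rw [hprod]
    calc ∫⁻ t : ℝ, volume {x : Fin n → ℝ | (t, x) ∈ B}
        = ∫⁻ t : ℝ, Set.indicator (Icc (0:ℝ) 1)
            (fun t => ENNReal.ofReal ((1 - t) ^ n) * Vn) t := by
          exact lintegral_congr hsec
      _ = ∫⁻ t in Icc (0:ℝ) 1, ENNReal.ofReal ((1 - t) ^ n) * Vn := by
          rw [lintegral_indicator measurableSet_Icc]
      _ = (∫⁻ t in Icc (0:ℝ) 1, ENNReal.ofReal ((1 - t) ^ n)) * Vn := by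
          rw [lintegral_mul_const]
          exact (ENNReal.measurable_ofReal.comp (by fun_prop))
      _ = ENNReal.ofReal (1 / (n + 1)) * Vn := by
          congr 1
          rw [← MeasureTheory.ofReal_integral_eq_lintegral_ofReal]
          · congr 1
            rw [MeasureTheory.integral_Icc_eq_integral_Ioc,
              ← intervalIntegral.integral_of_le (zero_le_one)]
            have := intervalIntegral.integral_comp_sub_left (a := (0:ℝ)) (b := 1)
              (fun x => x ^ n) 1
            simp only [sub_zero, sub_self] at this
            rw [this, integral_pow]
            simp
          · exact (continuous_const.sub continuous_id').pow n |>.integrableOn_Icc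
          · refine (ae_restrict_iff' measurableSet_Icc).2 (ae_of_all _ fun t ht => ?_)
            exact pow_nonneg (by linarith [ht.2]) n
      _ = ((n + 1).factorial : ℝ≥0∞)⁻¹ := by
          rw [ih]
          have h1 : ENNReal.ofReal (1 / (n + 1) : ℝ) = (((n + 1 : ℕ)) : ℝ≥0∞)⁻¹ := by
            rw [one_div, ENNReal.ofReal_inv_of_pos (by positivity)]
            congr 1
            push_cast
            rw [ENNReal.ofReal_add (by positivity) zero_le_one, ENNReal.ofReal_natCast,
              ENNReal.ofReal_one]
          rw [h1, ← ENNReal.mul_inv (Or.inl (by exact_mod_cast Nat.succ_ne_zero n))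
            (Or.inl (ENNReal.natCast_ne_top _)), ← Nat.cast_mul, ← Nat.factorial_succ]

lemma volume_simplexSet (ι : Type*) [Fintype ι] :
    volume (simplexSet ι) = (((Fintype.card ι).factorial : ℝ≥0∞))⁻¹ := by
  classical
  let e : Fin (Fintype.card ι) ≃ ι := (Fintype.equivFin ι).symm
  have hmp := volume_measurePreserving_piCongrLeft (fun _ : ι => ℝ) e
  have hmeas : MeasurableSet (simplexSet ι) := by
    have h1 : IsClosed {x : ι → ℝ | ∀ i, 0 ≤ x i} := by
      have : {x : ι → ℝ | ∀ i, 0 ≤ x i} = ⋂ i, {x | 0 ≤ x i} := by ext x; simp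
      rw [this]
      exact isClosed_iInter fun i => isClosed_le continuous_const (continuous_apply i)
    exact (h1.inter (isClosed_le (continuous_finset_sum _ fun i _ => continuous_apply i)
      continuous_const)).measurableSet
  have hpre : (MeasurableEquiv.piCongrLeft (fun _ : ι => ℝ) e) ⁻¹' (simplexSet ι)
      = simplexSet (Fin (Fintype.card ι)) := by
    ext g
    have happ : ∀ j, (MeasurableEquiv.piCongrLeft (fun _ : ι => ℝ) e) g (e j) = g j :=
      fun j => MeasurableEquiv.piCongrLeft_apply_apply (β := fun _ : ι => ℝ) e g j
    simp only [simplexSet, Set.mem_preimage, Set.mem_setOf_eq]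
    constructor
    · rintro ⟨h1, h2⟩
      refine ⟨fun j => by rw [← happ j]; exact h1 (e j), ?_⟩
      calc ∑ j, g j = ∑ j, (MeasurableEquiv.piCongrLeft (fun _ : ι => ℝ) e) g (e j) := by
            exact Finset.sum_congr rfl fun j _ => (happ j).symm
        _ = ∑ i, (MeasurableEquiv.piCongrLeft (fun _ : ι => ℝ) e) g i :=
            Equiv.sum_comp e _
        _ ≤ 1 := h2
    · rintro ⟨h1, h2⟩
      constructor
      · intro i
        have := h1 (e.symm i)
        rwa [← happ (e.symm i), Equiv.apply_symm_apply] at this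
      · calc ∑ i, (MeasurableEquiv.piCongrLeft (fun _ : ι => ℝ) e) g i
            = ∑ j, (MeasurableEquiv.piCongrLeft (fun _ : ι => ℝ) e) g (e j) :=
              (Equiv.sum_comp e _).symm
          _ = ∑ j, g j := Finset.sum_congr rfl fun j _ => happ j
          _ ≤ 1 := h2
  rw [← volume_simplexSet_fin (Fintype.card ι), ← hpre]
  exact (hmp.measure_preimage hmeas.nullMeasurableSet).symm

lemma volume_coord_zero {ι : Type*} [Fintype ι] (i : ι) :
    volume {x : ι → ℝ | x i = 0} = 0 := by
  classical
  have h : {x : ι → ℝ | x i = 0}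
      = Set.pi Set.univ (fun j => if j = i then ({0} : Set ℝ) else Set.univ) := by
    ext x
    simp only [Set.mem_setOf_eq, Set.mem_pi, Set.mem_univ, forall_true_left]
    constructor
    · intro hx j
      by_cases hj : j = i
      · subst hj; simp [hx]
      · simp [hj]
    · intro hx
      have := hx i
      simpa using this
  rw [h, volume_pi_pi]
  exact Finset.prod_eq_zero (Finset.mem_univ i) (by simp)

lemma volume_posSimplexSet (ι : Type*) [Fintype ι] :
    volume {x : ι → ℝ | (∀ i, 0 < x i) ∧ ∑ i, x i ≤ 1}
      = (((Fintype.card ι).factorial : ℝ≥0∞))⁻¹ := by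
  apply le_antisymm
  · rw [← volume_simplexSet]
    apply measure_mono
    rintro x ⟨h1, h2⟩
    exact ⟨fun i => (h1 i).le, h2⟩
  · rw [← volume_simplexSet ι]
    have hsub : simplexSet ι ⊆ {x : ι → ℝ | (∀ i, 0 < x i) ∧ ∑ i, x i ≤ 1}
        ∪ ⋃ i, {x : ι → ℝ | x i = 0} := by
      rintro x ⟨h1, h2⟩
      by_cases hall : ∀ i, 0 < x i
      · exact Or.inl ⟨hall, h2⟩
      · push_neg at hall
        obtain ⟨i, hi⟩ := hall
        exact Or.inr (Set.mem_iUnion.2 ⟨i, le_antisymm hi (h1 i)⟩)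
    calc volume (simplexSet ι)
        ≤ volume ({x : ι → ℝ | (∀ i, 0 < x i) ∧ ∑ i, x i ≤ 1}
            ∪ ⋃ i, {x : ι → ℝ | x i = 0}) := measure_mono hsub
      _ ≤ volume {x : ι → ℝ | (∀ i, 0 < x i) ∧ ∑ i, x i ≤ 1}
            + volume (⋃ i, {x : ι → ℝ | x i = 0}) := measure_union_le _ _
      _ = volume {x : ι → ℝ | (∀ i, 0 < x i) ∧ ∑ i, x i ≤ 1} := by
          rw [measure_iUnion_null fun i => volume_coord_zero i, add_zero]

lemma volume_negSimplexSet (ι : Type*) [Fintype ι] :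
    volume {x : ι → ℝ | (∀ i, x i < 0) ∧ ∑ i, (- x i) ≤ 1}
      = (((Fintype.card ι).factorial : ℝ≥0∞))⁻¹ := by
  have h : {x : ι → ℝ | (∀ i, x i < 0) ∧ ∑ i, (- x i) ≤ 1}
      = (-1 : ℝ) • {x : ι → ℝ | (∀ i, 0 < x i) ∧ ∑ i, x i ≤ 1} := by
    ext x
    rw [Set.mem_smul_set_iff_inv_smul_mem₀ (by norm_num : (-1 : ℝ) ≠ 0)]
    simp only [Set.mem_setOf_eq, Pi.smul_apply, smul_eq_mul]
    constructor
    · rintro ⟨h1, h2⟩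
      constructor
      · intro i; have := h1 i; nlinarith
      · calc ∑ i, (-1 : ℝ)⁻¹ * x i = ∑ i, (- x i) := by
              refine Finset.sum_congr rfl fun i _ => by ring
          _ ≤ 1 := h2
    · rintro ⟨h1, h2⟩
      constructor
      · intro i; have := h1 i; nlinarith
      · calc ∑ i, (- x i) = ∑ i, (-1 : ℝ)⁻¹ * x i := by
              refine Finset.sum_congr rfl fun i _ => by ring
          _ ≤ 1 := h2
  rw [h, Measure.addHaar_smul]
  simp [volume_posSimplexSet ι]

section Pieces
variable {n : ℕ}

def negSet (ι : Type*) [Fintype ι] : Set (ι → ℝ) :=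
  {x | (∀ i, x i < 0) ∧ ∑ i, (- x i) ≤ 1}

lemma measurableSet_negSet (ι : Type*) [Fintype ι] : MeasurableSet (negSet ι) := by
  have h1 : MeasurableSet {x : ι → ℝ | ∀ i, x i < 0} := by
    have : {x : ι → ℝ | ∀ i, x i < 0} = ⋂ i, {x | x i < 0} := by ext x; simp
    rw [this]
    exact MeasurableSet.iInter fun i =>
      measurableSet_lt (measurable_pi_apply i) measurable_const
  have h2 : MeasurableSet {x : ι → ℝ | ∑ i, (- x i) ≤ 1} :=
    (isClosed_le (by exact continuous_finset_sum _ fun i _ => (continuous_apply i).neg)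
      continuous_const).measurableSet
  exact h1.inter h2

def pieceEquiv (A : Finset (Fin n)) :
    (Fin n → ℝ) ≃ᵐ ({i // i ∈ A} → ℝ) × ({i // ¬ i ∈ A} → ℝ) :=
  MeasurableEquiv.piEquivPiSubtypeProd (fun _ : Fin n => ℝ) (fun i => i ∈ A)

def piece (A : Finset (Fin n)) : Set (Fin n → ℝ) :=
  (pieceEquiv A) ⁻¹' ((simplexSet {i // i ∈ A}) ×ˢ (negSet {i // ¬ i ∈ A}))

lemma measurableSet_piece (A : Finset (Fin n)) : MeasurableSet (piece A) :=
  (pieceEquiv A).measurable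
    (((isClosed_simplexSet _).measurableSet).prod (measurableSet_negSet _))

lemma mem_piece (A : Finset (Fin n)) (x : Fin n → ℝ) :
    x ∈ piece A ↔ ((∀ j : {i // i ∈ A}, 0 ≤ x j.1) ∧ ∑ j : {i // i ∈ A}, x j.1 ≤ 1)
      ∧ ((∀ j : {i // ¬ i ∈ A}, x j.1 < 0) ∧ ∑ j : {i // ¬ i ∈ A}, (- x j.1) ≤ 1) := by
  rfl

lemma volume_piece (A : Finset (Fin n)) :
    volume (piece A) = ((A.card.factorial : ℝ≥0∞))⁻¹ * (((n - A.card).factorial : ℝ≥0∞))⁻¹ := by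
  have hmp := MeasureTheory.volume_preserving_piEquivPiSubtypeProd
    (fun _ : Fin n => ℝ) (fun i => i ∈ A)
  unfold piece pieceEquiv
  rw [hmp.measure_preimage
    ((((isClosed_simplexSet _).measurableSet).prod (measurableSet_negSet _)).nullMeasurableSet)]
  rw [Measure.volume_eq_prod, Measure.prod_prod]
  have h1 := volume_simplexSet {i // i ∈ A}
  have h2 := volume_negSimplexSet {i // ¬ i ∈ A}
  rw [Fintype.card_coe] at h1
  rw [Fintype.card_subtype_compl, Fintype.card_fin, Fintype.card_coe] at h2
  convert congrArg₂ (fun a b : ℝ≥0∞ => a * b) h1 h2 using 2 <;> congr!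
end Pieces

def diffBody (n : ℕ) : Set (Fin n → ℝ) :=
  {x | ∑ i, max (x i) 0 ≤ 1 ∧ ∑ i, max (- x i) 0 ≤ 1}

lemma pieces_disjoint {n : ℕ} : Pairwise (Function.onFun Disjoint (piece (n := n))) := by
  intro A B hAB
  rw [Function.onFun, Set.disjoint_left]
  intro x hxA hxB
  rw [mem_piece] at hxA hxB
  apply hAB
  ext i
  constructor
  · intro hiA
    by_contra hiB
    exact absurd (hxA.1.1 ⟨i, hiA⟩) (not_le.2 (hxB.2.1 ⟨i, hiB⟩))
  · intro hiB
    by_contra hiA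
    exact absurd (hxB.1.1 ⟨i, hiB⟩) (not_le.2 (hxA.2.1 ⟨i, hiA⟩))

lemma iUnion_pieces (n : ℕ) : (⋃ A : Finset (Fin n), piece A) = diffBody n := by
  ext x
  simp only [Set.mem_iUnion]
  constructor
  · rintro ⟨A, hx⟩
    rw [mem_piece] at hx
    obtain ⟨⟨h1, h2⟩, h3, h4⟩ := hx
    constructor
    · calc ∑ i, max (x i) 0
          = ∑ i ∈ A, max (x i) 0 + ∑ i ∈ Aᶜ, max (x i) 0 :=
            (Finset.sum_add_sum_compl A _).symm
        _ = ∑ i ∈ A, max (x i) 0 := by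
            have hz : ∑ i ∈ Aᶜ, max (x i) 0 = 0 := Finset.sum_eq_zero fun i hi =>
              max_eq_right (le_of_lt (h3 ⟨i, Finset.mem_compl.1 hi⟩))
            rw [hz, add_zero]
        _ = ∑ i ∈ A, x i := by
            refine Finset.sum_congr rfl fun i hi => max_eq_left (h1 ⟨i, hi⟩)
        _ = ∑ j : {i // i ∈ A}, x j.1 := (Finset.sum_coe_sort A _).symm
        _ ≤ 1 := h2
    · calc ∑ i, max (- x i) 0
          = ∑ i ∈ Aᶜ, max (- x i) 0 + ∑ i ∈ A, max (- x i) 0 := by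
            rw [add_comm]
            exact (Finset.sum_add_sum_compl A _).symm
        _ = ∑ i ∈ Aᶜ, max (- x i) 0 := by
            have hz : ∑ i ∈ A, max (- x i) 0 = 0 := Finset.sum_eq_zero fun i hi =>
              max_eq_right (by simpa using h1 ⟨i, hi⟩)
            rw [hz, add_zero]
        _ = ∑ i ∈ Aᶜ, (- x i) := by
            refine Finset.sum_congr rfl fun i hi =>
              max_eq_left (by simpa using le_of_lt (h3 ⟨i, Finset.mem_compl.1 hi⟩))
        _ = ∑ j : {i // ¬ i ∈ A}, (- x j.1) :=
            Finset.sum_subtype Aᶜ (fun i => Finset.mem_compl) _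
        _ ≤ 1 := h4
  · rintro ⟨hx1, hx2⟩
    refine ⟨Finset.univ.filter (fun i => 0 ≤ x i), ?_⟩
    rw [mem_piece]
    refine ⟨⟨?_, ?_⟩, ?_, ?_⟩
    · rintro ⟨i, hi⟩
      exact (Finset.mem_filter.1 hi).2
    · calc ∑ j : {i // i ∈ Finset.univ.filter (fun i => 0 ≤ x i)}, x j.1
          = ∑ i ∈ Finset.univ.filter (fun i => 0 ≤ x i), x i :=
            Finset.sum_coe_sort _ _
        _ ≤ ∑ i ∈ Finset.univ.filter (fun i => 0 ≤ x i), max (x i) 0 :=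
            Finset.sum_le_sum fun i _ => le_max_left _ _
        _ ≤ ∑ i, max (x i) 0 :=
            Finset.sum_le_sum_of_subset_of_nonneg (Finset.subset_univ _)
              (fun i _ _ => le_max_right _ _)
        _ ≤ 1 := hx1
    · rintro ⟨i, hi⟩
      simp only [Finset.mem_filter, Finset.mem_univ, true_and, not_le] at hi
      exact hi
    · calc ∑ j : {i // ¬ i ∈ Finset.univ.filter (fun i => 0 ≤ x i)}, (- x j.1)
          = ∑ i ∈ (Finset.univ.filter (fun i => 0 ≤ x i))ᶜ, (- x i) :=
            (Finset.sum_subtype ((Finset.univ.filter (fun i => 0 ≤ x i))ᶜ)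
              (fun i => Finset.mem_compl) (fun i => - x i)).symm
        _ ≤ ∑ i ∈ (Finset.univ.filter (fun i => 0 ≤ x i))ᶜ, max (- x i) 0 :=
            Finset.sum_le_sum fun i _ => le_max_left _ _
        _ ≤ ∑ i, max (- x i) 0 :=
            Finset.sum_le_sum_of_subset_of_nonneg (Finset.subset_univ _)
              (fun i _ _ => le_max_right _ _)
        _ ≤ 1 := hx2

lemma nat_vandermonde (n : ℕ) :
    ∑ j ∈ Finset.range (n + 1), n.choose j * n.choose j = (2 * n).choose n := by
  rw [two_mul, Nat.add_choose_eq, Finset.Nat.sum_antidiagonal_eq_sum_range_succ_mk]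
  exact Finset.sum_congr rfl fun j hj => by
    rw [Nat.choose_symm (Nat.lt_succ_iff.1 (Finset.mem_range.1 hj))]

lemma volume_diffBody (n : ℕ) :
    volume (diffBody n) = (((2 * n).choose n : ℝ≥0∞)) * ((n.factorial : ℝ≥0∞))⁻¹ := by
  rw [← iUnion_pieces n, measure_iUnion pieces_disjoint measurableSet_piece, tsum_fintype]
  simp_rw [volume_piece]
  rw [← Finset.powerset_univ,
    Finset.sum_powerset_apply_card
      (fun k => ((k.factorial : ℝ≥0∞))⁻¹ * (((n - k).factorial : ℝ≥0∞))⁻¹)]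
  have hcard : (Finset.univ : Finset (Fin n)).card = n := by simp
  rw [hcard]
  have hterm : ∀ j ∈ Finset.range (n + 1),
      (n.choose j) • (((j.factorial : ℝ≥0∞))⁻¹ * (((n - j).factorial : ℝ≥0∞))⁻¹)
        = ((n.choose j : ℝ≥0∞) * (n.choose j : ℝ≥0∞)) * ((n.factorial : ℝ≥0∞))⁻¹ := by
    intro j hj
    have hjn : j ≤ n := Nat.lt_succ_iff.1 (Finset.mem_range.1 hj)
    have hfact : (n.choose j) * (j.factorial * (n - j).factorial) = n.factorial := by
      rw [← mul_assoc]
      exact Nat.choose_mul_factorial_mul_factorial hjn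
    have hc0 : ((n.choose j : ℝ≥0∞)) ≠ 0 := Nat.cast_ne_zero.2 (Nat.choose_pos hjn).ne'
    have h1 : ((j.factorial : ℝ≥0∞))⁻¹ * (((n - j).factorial : ℝ≥0∞))⁻¹
        = ((n.choose j : ℝ≥0∞)) * ((n.factorial : ℝ≥0∞))⁻¹ := by
      rw [← ENNReal.mul_inv (Or.inl (Nat.cast_ne_zero.2 j.factorial_ne_zero))
        (Or.inl (ENNReal.natCast_ne_top _)), ← Nat.cast_mul, ← hfact]
      push_cast
      rw [ENNReal.mul_inv (Or.inl hc0) (Or.inl (ENNReal.natCast_ne_top _)),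
        ← mul_assoc, ENNReal.mul_inv_cancel hc0 (ENNReal.natCast_ne_top _), one_mul]
    rw [nsmul_eq_mul, h1, ← mul_assoc]
  rw [Finset.sum_congr rfl hterm, ← Finset.sum_mul]
  congr 1
  norm_cast
  exact nat_vandermonde n

lemma convex_simplexSet (ι : Type*) [Fintype ι] : Convex ℝ (simplexSet ι) := by
  rintro x ⟨hx1, hx2⟩ y ⟨hy1, hy2⟩ a b ha hb hab
  refine ⟨fun i => add_nonneg (mul_nonneg ha (hx1 i)) (mul_nonneg hb (hy1 i)), ?_⟩
  simp only [Pi.add_apply, Pi.smul_apply, smul_eq_mul]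
  rw [Finset.sum_add_distrib, ← Finset.mul_sum, ← Finset.mul_sum]
  calc a * ∑ i, x i + b * ∑ i, y i ≤ a * 1 + b * 1 :=
        add_le_add (mul_le_mul_of_nonneg_left hx2 ha) (mul_le_mul_of_nonneg_left hy2 hb)
    _ = 1 := by rw [mul_one, mul_one, hab]

def stdVerts (n : ℕ) : Fin (n + 1) → (Fin n → ℝ) :=
  Fin.cons 0 (fun i => Pi.single i 1)

lemma convexHull_stdVerts (n : ℕ) :
    convexHull ℝ (Set.range (stdVerts n)) = simplexSet (Fin n) := by
  apply le_antisymm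
  · apply convexHull_min _ (convex_simplexSet (Fin n))
    rintro _ ⟨i, rfl⟩
    induction i using Fin.cases with
    | zero =>
      refine ⟨fun i => by simp [stdVerts], by simp [stdVerts]⟩
    | succ j =>
      refine ⟨fun i => ?_, ?_⟩
      · simp only [stdVerts, Fin.cons_succ, Pi.single_apply]
        split <;> norm_num
      · simp [stdVerts, Fin.cons_succ, Finset.sum_pi_single']
  · rintro x ⟨hx1, hx2⟩
    set w : Fin (n + 1) → ℝ := Fin.cons (1 - ∑ i, x i) x with hw
    have hsum : ∑ i, w i = 1 := by
      rw [hw, Fin.sum_univ_succ]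
      simp
    have hw0 : ∀ i ∈ (Finset.univ : Finset (Fin (n + 1))), 0 ≤ w i := by
      intro i _
      induction i using Fin.cases with
      | zero => simpa [hw] using hx2
      | succ j => simpa [hw] using hx1 j
    have hz : ∀ i ∈ (Finset.univ : Finset (Fin (n + 1))),
        stdVerts n i ∈ Set.range (stdVerts n) := fun i _ => ⟨i, rfl⟩
    have hmem := Finset.centerMass_mem_convexHull (Finset.univ : Finset (Fin (n + 1)))
      (w := w) (z := stdVerts n) (s := Set.range (stdVerts n)) hw0
      (by rw [hsum]; norm_num) hz
    rw [Finset.centerMass_eq_of_sum_1 _ _ hsum] at hmem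
    convert hmem
    rw [Fin.sum_univ_succ]
    simp only [hw, Fin.cons_zero, Fin.cons_succ, stdVerts, smul_zero, zero_add]
    have hsingle : ∀ j : Fin n,
        x j • (Pi.single j (1:ℝ) : Fin n → ℝ) = (Pi.single j (x j) : Fin n → ℝ) := by
      intro j
      funext k
      simp only [Pi.smul_apply, Pi.single_apply, smul_eq_mul, mul_ite, mul_one, mul_zero]
    rw [Finset.sum_congr rfl fun j _ => hsingle j, Finset.univ_sum_single]

lemma diff_simplexSet (n : ℕ) :
    {z : Fin n → ℝ | ∃ a ∈ simplexSet (Fin n), ∃ b ∈ simplexSet (Fin n), a - b = z}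
      = diffBody n := by
  ext z
  constructor
  · rintro ⟨a, ⟨ha1, ha2⟩, b, ⟨hb1, hb2⟩, rfl⟩
    constructor
    · calc ∑ i, max ((a - b) i) 0 ≤ ∑ i, a i := by
            refine Finset.sum_le_sum fun i _ => ?_
            simp only [Pi.sub_apply]
            exact max_le (by linarith [hb1 i]) (ha1 i)
        _ ≤ 1 := ha2
    · calc ∑ i, max (- (a - b) i) 0 ≤ ∑ i, b i := by
            refine Finset.sum_le_sum fun i _ => ?_
            simp only [Pi.sub_apply]
            exact max_le (by linarith [ha1 i]) (hb1 i)
        _ ≤ 1 := hb2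
  · rintro ⟨h1, h2⟩
    refine ⟨fun i => max (z i) 0, ⟨fun i => le_max_right _ _, h1⟩,
      fun i => max (- z i) 0, ⟨fun i => le_max_right _ _, h2⟩, ?_⟩
    funext i
    simp only [Pi.sub_apply]
    rcases le_total 0 (z i) with h | h
    · rw [max_eq_left h, max_eq_right (by linarith)]
      ring
    · rw [max_eq_right h, max_eq_left (by linarith)]
      ring

section Affine
variable {n : ℕ} (p : Fin (n + 1) → (Fin n → ℝ))

def theLin : (Fin n → ℝ) →ₗ[ℝ] (Fin n → ℝ) :=
  Matrix.toLin' (Matrix.of fun j i => p i.succ j - p 0 j)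

lemma phi_comp_verts : (fun x => p 0 + theLin p x) ∘ stdVerts n = p := by
  funext i
  induction i using Fin.cases with
  | zero => simp [stdVerts, theLin]
  | succ j =>
    simp only [Function.comp_apply, stdVerts, Fin.cons_succ, theLin, Matrix.toLin'_apply,
      Matrix.mulVec_single]
    funext k
    simp only [Pi.add_apply, Pi.smul_apply, MulOpposite.op_one, one_smul, Matrix.col_apply, Matrix.of_apply, mul_one]
    ring

def theAff : (Fin n → ℝ) →ᵃ[ℝ] (Fin n → ℝ) where
  toFun := fun x => p 0 + theLin p x
  linear := theLin p
  map_vadd' := by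
    intro q v
    simp only [map_add, vadd_eq_add]
    abel

lemma hull_eq_image :
    convexHull ℝ (Set.range p) = (fun x => p 0 + theLin p x) '' simplexSet (Fin n) := by
  conv_lhs => rw [← phi_comp_verts p]
  rw [Set.range_comp]
  have h := AffineMap.image_convexHull (𝕜 := ℝ) (f := theAff p) (s := Set.range (stdVerts n))
  have hcoe : ⇑(theAff p) = fun x => p 0 + theLin p x := rfl
  rw [hcoe] at h
  rw [← h, convexHull_stdVerts n]

lemma vol_translate (c : Fin n → ℝ) (s : Set (Fin n → ℝ)) :
    volume ((fun y => c + y) '' s) = volume s := by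
  have h : (fun y => c + y) '' s = (fun y => -c + y) ⁻¹' s := by
    ext y
    constructor
    · rintro ⟨x, hx, rfl⟩
      simpa using hx
    · intro hy
      exact ⟨-c + y, hy, by show c + (-c + y) = y; rw [← add_assoc, add_neg_cancel, zero_add]⟩
  rw [h, measure_preimage_add]

lemma vol_hull : volume (convexHull ℝ (Set.range p))
    = ENNReal.ofReal |LinearMap.det (theLin p)| * ((n.factorial : ℝ≥0∞))⁻¹ := by
  rw [hull_eq_image p]
  have h : (fun x => p 0 + theLin p x) '' simplexSet (Fin n)
      = (fun y => p 0 + y) '' ((theLin p) '' simplexSet (Fin n)) := by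
    rw [← Set.image_comp]
    rfl
  rw [h, vol_translate, Measure.addHaar_image_linearMap, volume_simplexSet, Fintype.card_fin]

lemma diffset_eq : {z : Fin n → ℝ | ∃ a ∈ convexHull ℝ (Set.range p),
      ∃ b ∈ convexHull ℝ (Set.range p), a - b = z}
    = (theLin p) '' diffBody n := by
  rw [hull_eq_image p]
  ext z
  constructor
  · rintro ⟨_, ⟨a, ha, rfl⟩, _, ⟨b, hb, rfl⟩, rfl⟩
    refine ⟨a - b, diff_simplexSet n ▸ ⟨a, ha, b, hb, rfl⟩, ?_⟩
    rw [map_sub]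
    simp only []
    abel
  · rintro ⟨d, hd, rfl⟩
    rw [← diff_simplexSet n] at hd
    obtain ⟨a, ha, b, hb, rfl⟩ := hd
    refine ⟨_, ⟨a, ha, rfl⟩, _, ⟨b, hb, rfl⟩, ?_⟩
    rw [map_sub]
    simp only []
    abel

lemma vol_diffset : volume {z : Fin n → ℝ | ∃ a ∈ convexHull ℝ (Set.range p),
      ∃ b ∈ convexHull ℝ (Set.range p), a - b = z}
    = (((2 * n).choose n : ℝ≥0∞)) * volume (convexHull ℝ (Set.range p)) := by
  rw [diffset_eq p, Measure.addHaar_image_linearMap, volume_diffBody, vol_hull p,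
    mul_left_comm]
end Affine

end AuxSimplexVolume

/-- For an `n`-dimensional simplex `S ⊆ ℝⁿ` (the convex hull of `n+1` affinely
independent points), `∫ Δ_{−∞} χ_S = 2^{−n} (2n choose n) V_n(S)`. -/
theorem lintegral_diffNegInf_simplex {n : ℕ} (p : Fin (n + 1) → (Fin n → ℝ))
    (hp : AffineIndependent ℝ p) :
    ∫⁻ z, diffNegInf
        (fun x => if x ∈ convexHull ℝ (Set.range p) then (1 : ℝ) else 0) z =
      (2 ^ n : ℝ≥0∞)⁻¹ * (Nat.choose (2 * n) n : ℝ≥0∞) *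
        volume (convexHull ℝ (Set.range p)) := by
  set S := convexHull ℝ (Set.range p) with hSdef
  set SD := {z : Fin n → ℝ | ∃ a ∈ S, ∃ b ∈ S, a - b = z} with hSDdef
  set T := {z : Fin n → ℝ | ∃ a ∈ S, ∃ b ∈ S, (1 / 2 : ℝ) • (a - b) = z} with hTdef
  -- compactness
  have hScompact : IsCompact S := (Set.finite_range p).isCompact_convexHull ℝ
  have hTimage : T = (fun q : (Fin n → ℝ) × (Fin n → ℝ) => (1 / 2 : ℝ) • (q.1 - q.2))
      '' (S ×ˢ S) := by
    ext z
    constructor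
    · rintro ⟨a, ha, b, hb, rfl⟩
      exact ⟨(a, b), ⟨ha, hb⟩, rfl⟩
    · rintro ⟨⟨a, b⟩, ⟨ha, hb⟩, rfl⟩
      exact ⟨a, ha, b, hb, rfl⟩
  have hTcompact : IsCompact T := by
    rw [hTimage]
    exact (hScompact.prod hScompact).image
      (((continuous_fst.sub continuous_snd).const_smul (1 / 2 : ℝ)))
  have hTmeas : MeasurableSet T := hTcompact.measurableSet
  -- pointwise identification
  have hpt : ∀ z, diffNegInf (fun x => if x ∈ S then (1 : ℝ) else 0) z
      = T.indicator (fun _ => (1 : ℝ≥0∞)) z := by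
    intro z
    by_cases hz : z ∈ T
    · rw [Set.indicator_of_mem hz]
      obtain ⟨a, ha, b, hb, hab⟩ := hz
      apply le_antisymm
      · apply sSup_le
        rintro r ⟨x, y, hxy, rfl⟩
        have hmin : min (if x ∈ S then (1:ℝ) else 0) (if -y ∈ S then (1:ℝ) else 0) ≤ 1 :=
          le_trans (min_le_left _ _) (by split <;> norm_num)
        calc ENNReal.ofReal _ ≤ ENNReal.ofReal 1 := ENNReal.ofReal_le_ofReal hmin
          _ = 1 := ENNReal.ofReal_one
      · apply le_sSup
        refine ⟨a, -b, ?_, ?_⟩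
        · rw [← sub_eq_add_neg]
          exact hab
        · simp [ha, hb]
    · rw [Set.indicator_of_notMem hz]
      apply le_antisymm _ zero_le
      apply sSup_le
      rintro r ⟨x, y, hxy, rfl⟩
      have hmin : min ((fun x => if x ∈ S then (1:ℝ) else 0) x)
          ((fun x => if x ∈ S then (1:ℝ) else 0) (-y)) ≤ 0 := by
        by_cases hx : x ∈ S
        · by_cases hy : -y ∈ S
          · exfalso
            apply hz
            refine ⟨x, hx, -y, hy, ?_⟩
            rw [sub_neg_eq_add]
            exact hxy
          · simp only [if_neg hy]
            exact min_le_right _ _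
        · simp only [if_neg hx]
          exact min_le_left _ _
      have := ENNReal.ofReal_le_ofReal hmin
      rwa [ENNReal.ofReal_zero] at this
  rw [lintegral_congr hpt, lintegral_indicator hTmeas]
  simp only [lintegral_const, one_mul, MeasurableSet.univ, Measure.restrict_apply,
    Set.univ_inter]
  -- volume of T
  have hTsmul : T = (1 / 2 : ℝ) • SD := by
    ext z
    constructor
    · rintro ⟨a, ha, b, hb, rfl⟩
      exact ⟨a - b, ⟨a, ha, b, hb, rfl⟩, rfl⟩
    · rintro ⟨w, ⟨a, ha, b, hb, rfl⟩, rfl⟩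
      exact ⟨a, ha, b, hb, rfl⟩
  have hvolT : volume T = ENNReal.ofReal ((1 / 2 : ℝ) ^ n) * volume SD := by
    rw [hTsmul, Measure.addHaar_smul]
    congr 2
    rw [Module.finrank_fin_fun]
    exact abs_of_nonneg (by positivity)
  have h2 : ENNReal.ofReal ((1 / 2 : ℝ) ^ n) = ((2 : ℝ≥0∞) ^ n)⁻¹ := by
    rw [ENNReal.ofReal_pow (by norm_num), one_div,
      ENNReal.ofReal_inv_of_pos (by norm_num), ENNReal.inv_pow]
    norm_num
  rw [hvolT, h2, vol_diffset p, ← mul_assoc]
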